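/- Let n be a positive integer, Q = 2n + 2, c = n!/(4(π/2)^{n+1}), and for t > 0 and g = (s,z) ∈ ℋ_n set S(t,g) = c/(|z|² + t − i s)^{n+1}. Then for every t > 0, τ > 0 and g = (s,z) ∈ ℋ_n with g ≠ 0, |S(t,g) − S(t+τ², g)| ≤ c(n+1) τ² / ‖g‖^{Q+2}, where ‖g‖ = (|z|⁴ + s²)^{1/4} is the homogeneous norm. -/

import Mathlib

noncomputable section

/-- A point of the Heisenberg group ℋ_n : `(s, z) ∈ ℝ × ℂⁿ`. -/
abbrev Heis (n : ℕ) := ℝ × (Fin n → ℂ)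

/-- `|z|² = ∑ⱼ |zⱼ|²`. -/
def znormSq {n : ℕ} (z : Fin n → ℂ) : ℝ := ∑ j, Complex.normSq (z j)

/-- The homogeneous norm `‖(s,z)‖ = (|z|⁴ + s²)^{1/4}`. -/
def hnorm {n : ℕ} (g : Heis n) : ℝ := ((znormSq g.2) ^ 2 + g.1 ^ 2) ^ (1/4 : ℝ)

/-- The constant `c = n! / (4 (π/2)^{n+1})`. -/
def szegoConst (n : ℕ) : ℝ := (Nat.factorial n : ℝ) / (4 * (Real.pi / 2) ^ (n + 1))

/-- The Cauchy–Szegő kernel `S(t,g) = c/(|z|² + t − i s)^{n+1}` on the Siegel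
upper half space associated to ℋ_n. -/
def Szego (n : ℕ) (t : ℝ) (g : Heis n) : ℂ :=
  (szegoConst n : ℂ) / (((znormSq g.2 : ℝ) : ℂ) + (t : ℂ) - Complex.I * (g.1 : ℂ)) ^ (n + 1)

/-- Pointwise difference estimate for the Cauchy–Szegő kernel. -/
theorem szego_kernel_difference_pointwise (n : ℕ) (hn : 0 < n)
    (t τ : ℝ) (ht : 0 < t) (hτ : 0 < τ) (g : Heis n) (hg : g ≠ 0) :
    ‖Szego n t g - Szego n (t + τ ^ 2) g‖ ≤
      szegoConst n * (n + 1) * τ ^ 2 / (hnorm g) ^ ((2 * n + 2) + 2) := by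
  obtain ⟨s, z⟩ := g
  set A : ℝ := znormSq z with hA
  have hA0 : 0 ≤ A := Finset.sum_nonneg fun j _ => Complex.normSq_nonneg _
  set m : ℕ := n + 1 with hm
  set w : ℂ := (A : ℂ) + (t : ℂ) - Complex.I * (s : ℂ) with hw
  set v : ℂ := (A : ℂ) + ((t + τ ^ 2 : ℝ) : ℂ) - Complex.I * (s : ℂ) with hv
  have hwre : w.re = A + t := by simp [hw]
  have hwim : w.im = -s := by simp [hw]
  have hvre : v.re = A + t + τ ^ 2 := by
    rw [hv]; simp [← Complex.ofReal_pow]; ring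
  have hvim : v.im = -s := by rw [hv]; simp [← Complex.ofReal_pow]
  have hW2 : ‖w‖ ^ 2 = (A + t) ^ 2 + s ^ 2 := by
    rw [Complex.sq_norm, Complex.normSq_apply, hwre, hwim]; ring
  have hV2 : ‖v‖ ^ 2 = (A + t + τ ^ 2) ^ 2 + s ^ 2 := by
    rw [Complex.sq_norm, Complex.normSq_apply, hvre, hvim]; ring
  have hw0 : w ≠ 0 := by
    intro h
    have : w.re = 0 := by rw [h]; simp
    rw [hwre] at this; nlinarith
  have hv0 : v ≠ 0 := by
    intro h
    have : v.re = 0 := by rw [h]; simp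
    rw [hvre] at this; nlinarith
  have hWpos : 0 < ‖w‖ := norm_pos_iff.mpr hw0
  have hVpos : 0 < ‖v‖ := norm_pos_iff.mpr hv0
  have hWV : ‖w‖ ≤ ‖v‖ := by
    have h2 : ‖w‖ ^ 2 ≤ ‖v‖ ^ 2 := by rw [hW2, hV2]; nlinarith
    nlinarith
  -- homogeneous norm facts
  set N : ℝ := hnorm (s, z) with hN
  have hAs : 0 < A ^ 2 + s ^ 2 := by
    rcases eq_or_ne s 0 with hs | hs
    · rcases eq_or_ne z 0 with hz | hz
      · exact absurd (Prod.ext hs hz) hg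
      · have : ∃ j, z j ≠ 0 := by
          by_contra h
          push_neg at h
          exact hz (funext h)
        obtain ⟨j, hj⟩ := this
        have : 0 < A := by
          have := Complex.normSq_pos.mpr hj
          have hle : Complex.normSq (z j) ≤ A :=
            Finset.single_le_sum (fun i _ => Complex.normSq_nonneg _) (Finset.mem_univ j)
          linarith
        positivity
    · have : 0 < s ^ 2 := by positivity
      nlinarith [sq_nonneg A]
  have hNpos : 0 < N := by
    rw [hN, hnorm]
    exact Real.rpow_pos_of_pos hAs _
  have hN4 : N ^ 4 = A ^ 2 + s ^ 2 := by
    rw [hN, hnorm]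
    rw [← Real.rpow_natCast (((znormSq (s, z).2) ^ 2 + (s, z).1 ^ 2) ^ (1/4 : ℝ)) 4,
      ← Real.rpow_mul (le_of_lt hAs)]
    norm_num
  have hN2W : N ^ 2 ≤ ‖w‖ := by
    have h2 : (N ^ 2) ^ 2 ≤ ‖w‖ ^ 2 := by
      rw [hW2]
      have : (N ^ 2) ^ 2 = N ^ 4 := by ring
      rw [this, hN4]; nlinarith
    nlinarith [sq_nonneg N, hWpos]
  -- the difference identity
  have hvw : v - w = (τ ^ 2 : ℂ) := by rw [hv, hw]; push_cast; ring
  have hwm0 : w ^ m ≠ 0 := pow_ne_zero _ hw0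
  have hvm0 : v ^ m ≠ 0 := pow_ne_zero _ hv0
  have e1 : Szego n t (s, z) = (szegoConst n : ℂ) / w ^ m := rfl
  have e2 : Szego n (t + τ ^ 2) (s, z) = (szegoConst n : ℂ) / v ^ m := rfl
  have hdiff : Szego n t (s, z) - Szego n (t + τ ^ 2) (s, z) =
      (szegoConst n : ℂ) * (v ^ m - w ^ m) / (w ^ m * v ^ m) := by
    rw [e1, e2, div_sub_div _ _ hwm0 hvm0]
    congr 1
    ring
  -- bound the numerator
  have hsum : v ^ m - w ^ m = (∑ i ∈ Finset.range m, v ^ i * w ^ (m - 1 - i)) * (v - w) :=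
    (geom_sum₂_mul v w m).symm
  have hnum : ‖v ^ m - w ^ m‖ ≤ (m : ℝ) * ‖v‖ ^ (m - 1) * τ ^ 2 := by
    rw [hsum, norm_mul, hvw]
    have hτn : ‖((τ : ℂ)) ^ 2‖ = τ ^ 2 := by
      rw [norm_pow, Complex.norm_real, Real.norm_eq_abs, sq_abs]
    rw [hτn]
    have hs1 : ‖∑ i ∈ Finset.range m, v ^ i * w ^ (m - 1 - i)‖ ≤ (m : ℝ) * ‖v‖ ^ (m - 1) := by
      calc ‖∑ i ∈ Finset.range m, v ^ i * w ^ (m - 1 - i)‖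
          ≤ ∑ i ∈ Finset.range m, ‖v ^ i * w ^ (m - 1 - i)‖ := norm_sum_le _ _
        _ ≤ ∑ i ∈ Finset.range m, ‖v‖ ^ (m - 1) := by
            apply Finset.sum_le_sum
            intro i hi
            rw [norm_mul, norm_pow, norm_pow]
            have hi' : i < m := Finset.mem_range.mp hi
            calc ‖v‖ ^ i * ‖w‖ ^ (m - 1 - i)
                ≤ ‖v‖ ^ i * ‖v‖ ^ (m - 1 - i) := by
                  apply mul_le_mul_of_nonneg_left (pow_le_pow_left₀ hWpos.le hWV _) (by positivity)
              _ = ‖v‖ ^ (i + (m - 1 - i)) := (pow_add _ _ _).symm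
              _ = ‖v‖ ^ (m - 1) := by congr 1; omega
        _ = (m : ℝ) * ‖v‖ ^ (m - 1) := by
            rw [Finset.sum_const, Finset.card_range, nsmul_eq_mul]
    exact mul_le_mul_of_nonneg_right hs1 (by positivity)
  have hc : 0 < szegoConst n := by
    rw [szegoConst]
    have := Real.pi_pos
    positivity
  -- put it together
  rw [hdiff]
  rw [norm_div, norm_mul, norm_mul, norm_pow, norm_pow]
  have hcn : ‖(szegoConst n : ℂ)‖ = szegoConst n := by
    rw [Complex.norm_real, Real.norm_eq_abs, abs_of_pos hc]
  rw [hcn]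
  have hmm : m - 1 + 1 = m := by omega
  have hdenN : N ^ (2 * n + 2 + 2) = (N ^ 2) ^ (m + 1) := by
    have h : 2 * n + 2 + 2 = 2 * (m + 1) := by omega
    rw [h, mul_comm 2 (m+1), pow_mul]
    rw [← pow_mul, ← pow_mul, Nat.mul_comm]
  have hNden : N ^ (2 * n + 2 + 2) ≤ ‖w‖ ^ m * ‖w‖ := by
    rw [hdenN]
    calc (N ^ 2) ^ (m + 1) ≤ ‖w‖ ^ (m + 1) :=
          pow_le_pow_left₀ (by positivity) hN2W _
      _ = ‖w‖ ^ m * ‖w‖ := by rw [pow_succ]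
  rw [div_le_div_iff₀ (by positivity) (by positivity)]
  -- goal: szegoConst n * ‖v^m - w^m‖ * N^(2n+4) ≤ szegoConst n * (n+1) * τ² * (‖w‖^m * ‖v‖^m)
  have hVm : ‖v‖ ^ m = ‖v‖ ^ (m - 1) * ‖v‖ := by rw [← pow_succ, hmm]
  calc szegoConst n * ‖v ^ m - w ^ m‖ * N ^ (2 * n + 2 + 2)
      ≤ szegoConst n * ((m : ℝ) * ‖v‖ ^ (m - 1) * τ ^ 2) * (‖w‖ ^ m * ‖w‖) := by
        apply mul_le_mul (mul_le_mul_of_nonneg_left hnum hc.le) hNden (by positivity)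
          (by positivity)
    _ ≤ szegoConst n * ((m : ℝ) * ‖v‖ ^ (m - 1) * τ ^ 2) * (‖w‖ ^ m * ‖v‖) := by
        apply mul_le_mul_of_nonneg_left (mul_le_mul_of_nonneg_left hWV (by positivity))
          (by positivity)
    _ = szegoConst n * ((n : ℝ) + 1) * τ ^ 2 * (‖w‖ ^ m * ‖v‖ ^ m) := by
        rw [hVm]
        push_cast [hm]
        ring
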